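/- arXiv:math/0412397 — 4 statements merged into one kernel-verified Lean document; each statement's English description precedes it below -/
import Mathlib

section
/- Let C be a conformal algebra over a field k of characteristic 0 satisfying conformal associativity: (a ∘ₙ b) ∘ₘ c = ∑_{t≥0} (−1)^t C(n,t) a ∘_{n−t} (b ∘_{m+t} c) for all a,b,c ∈ C and n,m ≥ 0. Then the coefficient algebra Coeff C with multiplication a(n)b(m) = ∑_{s≥0} C(n,s)(a ∘ₛ b)(n+m−s) is associative: (a(n)b(m))c(l) = a(n)(b(m)c(l)) for all a,b,c ∈ C and n,m,l ∈ ℤ. -/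
/-- A conformal algebra over a field `k` of characteristic `0`: a `k[D]`-module
(encoded by the `k`-linear endomorphism `D`) with `k`-bilinear `n`-products
satisfying locality and sesquilinearity (with the convention `a ∘_{-1} b = 0`). -/
structure ConformalAlgebra (k C : Type*) [Field k] [CharZero k]
    [AddCommGroup C] [Module k C] where
  D : C →ₗ[k] C
  prod : ℕ → C →ₗ[k] C →ₗ[k] C
  locality : ∀ a b : C, ∃ N : ℕ, ∀ n, N ≤ n → prod n a b = 0
  sesq_left_zero : ∀ a b : C, prod 0 (D a) b = 0
  sesq_left : ∀ (n : ℕ) (a b : C),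
    prod (n + 1) (D a) b = -(((n : ℕ) + 1 : k)) • prod n a b
  sesq_right_zero : ∀ a b : C, prod 0 a (D b) = D (prod 0 a b)
  sesq_right : ∀ (n : ℕ) (a b : C),
    prod (n + 1) a (D b) = D (prod (n + 1) a b) + (((n : ℕ) + 1 : k)) • prod n a b


/-- The generalized (falling-factorial) binomial coefficient
`C(n,k) = n(n-1)⋯(n-k+1)/k!` for `n : ℤ`, `k : ℕ`, valued in `ℚ`. -/
def genChoose (n : ℤ) (k : ℕ) : ℚ :=
  (∏ i ∈ Finset.range k, ((n : ℚ) - i)) / (k.factorial : ℚ)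



lemma descPoch_prod (k : ℕ) (x : ℚ) :
    (descPochhammer ℤ k).smeval x = ∏ i ∈ Finset.range k, (x - i) := by
  induction k with
  | zero => simp [Polynomial.smeval_one]
  | succ k ih =>
    rw [descPochhammer_succ_right, Polynomial.smeval_mul, ih, Finset.prod_range_succ]
    congr 1
    simp [Polynomial.smeval_sub, Polynomial.smeval_X, Polynomial.smeval_natCast]

lemma genChoose_eq (n : ℤ) (k : ℕ) : genChoose n k = Ring.choose (n : ℚ) k := by
  have h := Ring.descPochhammer_eq_factorial_smul_choose (R := ℚ) (n : ℚ) k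
  rw [descPoch_prod] at h
  rw [genChoose, h, nsmul_eq_mul]
  field_simp

lemma genChoose_zero (n : ℤ) : genChoose n 0 = 1 := by simp [genChoose]

lemma genChoose_chu (A B : ℤ) (r : ℕ) :
    genChoose (A + B) r = ∑ j ∈ Finset.range (r + 1), genChoose A j * genChoose B (r - j) := by
  have h := Ring.add_choose_eq (R := ℚ) (r := (A : ℚ)) (s := (B : ℚ)) r (Commute.all _ _)
  rw [Finset.Nat.sum_antidiagonal_eq_sum_range_succ (fun i j => Ring.choose (A:ℚ) i * Ring.choose (B:ℚ) j)] at h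
  simp only [genChoose_eq]
  push_cast
  exact h


lemma gc_mul_binom (x : ℤ) (p t : ℕ) :
    genChoose x (p + t) * ((p + t).choose t : ℚ) = genChoose x p * genChoose (x - p) t := by
  have hsplit : (∏ i ∈ Finset.range (p + t), ((x : ℚ) - i))
      = (∏ i ∈ Finset.range p, ((x : ℚ) - i)) * ∏ i ∈ Finset.range t, (((x - p : ℤ) : ℚ) - i) := by
    rw [Finset.prod_range_add]
    congr 1
    refine Finset.prod_congr rfl fun i _ => ?_
    push_cast; ring
  have hfac : ((p + t).choose t : ℚ) = ((p + t).factorial : ℚ) / ((t.factorial : ℚ) * (p.factorial : ℚ)) := by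
    have := Nat.choose_mul_factorial_mul_factorial (Nat.le_add_left t p)
    have h2 : ((p + t).choose t * t.factorial * (p + t - t).factorial : ℕ) = (p+t).factorial := this
    field_simp
    push_cast [← h2]
    simp [Nat.add_sub_cancel]
  rw [genChoose, genChoose, genChoose, hsplit, hfac]
  have h1 : ((p+t).factorial : ℚ) ≠ 0 := Nat.cast_ne_zero.mpr (Nat.factorial_ne_zero _)
  have h2 : (p.factorial : ℚ) ≠ 0 := Nat.cast_ne_zero.mpr (Nat.factorial_ne_zero _)
  have h3 : (t.factorial : ℚ) ≠ 0 := Nat.cast_ne_zero.mpr (Nat.factorial_ne_zero _)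
  field_simp

lemma triangle_sum {M : Type*} [AddCommMonoid M] (q : ℕ) (f : ℕ → ℕ → M) :
    ∑ t ∈ Finset.range (q + 1), ∑ j ∈ Finset.range (q + 1 - t), f t j
      = ∑ r ∈ Finset.range (q + 1), ∑ t ∈ Finset.range (r + 1), f t (r - t) := by
  rw [Finset.sum_sigma', Finset.sum_sigma']
  refine Finset.sum_nbij' (fun x => ⟨x.1 + x.2, x.1⟩) (fun x => ⟨x.2, x.1 - x.2⟩) ?_ ?_ ?_ ?_ ?_
  · rintro ⟨t, j⟩ h
    simp only [Finset.mem_sigma, Finset.mem_range] at h ⊢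
    omega
  · rintro ⟨r, t⟩ h
    simp only [Finset.mem_sigma, Finset.mem_range] at h ⊢
    omega
  · rintro ⟨t, j⟩ h; simp
  · rintro ⟨r, t⟩ h
    simp only [Finset.mem_sigma, Finset.mem_range] at h
    simp only [Sigma.mk.inj_iff, heq_eq_eq]
    exact ⟨by omega, trivial⟩
  · rintro ⟨t, j⟩ h; simp

lemma alt_sum_choose (r : ℕ) :
    ∑ t ∈ Finset.range (r + 1), (-1 : ℚ) ^ t * (r.choose t : ℚ)
      = if r = 0 then 1 else 0 := by
  have h := Int.alternating_sum_range_choose (n := r)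
  have h2 : ((∑ i ∈ Finset.range (r + 1), ((-1) ^ i * r.choose i : ℤ) : ℤ) : ℚ)
      = ((if r = 0 then 1 else 0 : ℤ) : ℚ) := by rw [h]
  push_cast at h2
  rw [h2]

lemma key_identity (n m : ℤ) (p q : ℕ) :
    ∑ t ∈ Finset.range (q + 1),
        (-1 : ℚ) ^ t * ((p + t).choose t : ℚ)
          * (genChoose n (p + t) * genChoose (n + m - (p + t)) (q - t))
      = genChoose n p * genChoose m q := by
  have step1 : ∀ t ∈ Finset.range (q + 1),
      (-1 : ℚ) ^ t * ((p + t).choose t : ℚ)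
          * (genChoose n (p + t) * genChoose (n + m - (p + t)) (q - t))
        = ∑ j ∈ Finset.range (q + 1 - t),
            (-1 : ℚ) ^ t * genChoose n p * genChoose (n - p) t
              * genChoose (n - p - t) j * genChoose m (q - t - j) := by
    intro t ht
    simp only [Finset.mem_range] at ht
    have hb : genChoose n (p + t) * ((p + t).choose t : ℚ)
        = genChoose n p * genChoose (n - p) t := gc_mul_binom n p t
    have hc : genChoose (n + m - (p + t)) (q - t)
        = ∑ j ∈ Finset.range ((q - t) + 1), genChoose (n - p - t) j * genChoose m (q - t - j) := by
      have he : n + m - (p + t) = (n - p - t) + m := by push_cast; ring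
      rw [he, genChoose_chu]
    have hre : Finset.range ((q - t) + 1) = Finset.range (q + 1 - t) := by
      congr 1; omega
    rw [hc, hre]
    simp only [Finset.mul_sum]
    refine Finset.sum_congr rfl fun j hj => ?_
    have : (-1 : ℚ) ^ t * ((p + t).choose t : ℚ)
        * (genChoose n (p + t) * (genChoose (n - p - t) j * genChoose m (q - t - j)))
      = (-1 : ℚ) ^ t * (genChoose n (p + t) * ((p + t).choose t : ℚ))
        * (genChoose (n - p - t) j * genChoose m (q - t - j)) := by ring
    rw [this, hb]
    ring
  rw [Finset.sum_congr rfl step1, triangle_sum]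
  have step2 : ∀ r ∈ Finset.range (q + 1),
      ∑ t ∈ Finset.range (r + 1),
          (-1 : ℚ) ^ t * genChoose n p * genChoose (n - p) t
            * genChoose (n - p - t) (r - t) * genChoose m (q - t - (r - t))
        = (if r = 0 then 1 else 0) * (genChoose n p * genChoose (n - p) r * genChoose m (q - r)) := by
    intro r hr
    simp only [Finset.mem_range] at hr
    have hterm : ∀ t ∈ Finset.range (r + 1),
        (-1 : ℚ) ^ t * genChoose n p * genChoose (n - p) t
            * genChoose (n - p - t) (r - t) * genChoose m (q - t - (r - t))
          = ((-1 : ℚ) ^ t * (r.choose t : ℚ))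
              * (genChoose n p * genChoose (n - p) r * genChoose m (q - r)) := by
      intro t ht
      simp only [Finset.mem_range] at ht
      have htr : t ≤ r := by omega
      have hb : genChoose (n - p) (t + (r - t)) * ((t + (r - t)).choose (r - t) : ℚ)
          = genChoose (n - p) t * genChoose ((n - p) - t) (r - t) := gc_mul_binom (n - p) t (r - t)
      have h1 : t + (r - t) = r := by omega
      rw [h1] at hb
      have h2 : (r.choose (r - t) : ℚ) = (r.choose t : ℚ) := by
        rw [Nat.choose_symm htr]
      have h3 : q - t - (r - t) = q - r := by omega
      rw [h3, ← h2]
      linear_combination (-((-1 : ℚ) ^ t) * genChoose n p * genChoose m (q - r)) * hb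
    rw [Finset.sum_congr rfl hterm, ← Finset.sum_mul, alt_sum_choose]
  rw [Finset.sum_congr rfl step2]
  rw [Finset.sum_eq_single 0]
  · simp [genChoose_zero]
  · intro r _ hr0; simp [hr0]
  · intro h; simp at h

/-- if `C` satisfies conformal associativity
`(a ∘ₙ b) ∘ₘ c = ∑_t (−1)^t C(n,t) a ∘_{n−t} (b ∘_{m+t} c)`, then the
coefficient algebra is associative: `(a(n)b(m))c(l) = a(n)(b(m)c(l))`.
Elements of `Coeff C` are encoded by evaluating against an arbitrary family
`φ : ℤ → C →ₗ[k] M` linear in the `C`-argument. -/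
theorem coeff_algebra_associative {k C : Type*} [Field k] [CharZero k]
    [AddCommGroup C] [Module k C] (CA : ConformalAlgebra k C)
    (hass : ∀ (a b c : C) (n m : ℕ),
      CA.prod m (CA.prod n a b) c = ∑ t ∈ Finset.range (n + 1),
        ((-1 : k) ^ t * (n.choose t : k)) • CA.prod (n - t) a (CA.prod (m + t) b c))
    {M : Type*} [AddCommGroup M] [Module k M] (φ : ℤ → C →ₗ[k] M)
    (a b c : C) (n m l : ℤ) (N : ℕ)
    (h1 : ∀ s, N ≤ s → CA.prod s a b = 0)
    (h2 : ∀ s, N ≤ s → CA.prod s b c = 0)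
    (h3 : ∀ s u, N ≤ u → CA.prod u (CA.prod s a b) c = 0)
    (h4 : ∀ s u, N ≤ u → CA.prod u a (CA.prod s b c) = 0) :
    ∑ s ∈ Finset.range N, ∑ u ∈ Finset.range N,
        ((genChoose n s * genChoose (n + m - s) u : ℚ) : k) •
          φ (n + m + l - s - u) (CA.prod u (CA.prod s a b) c)
      = ∑ u ∈ Finset.range N, ∑ s ∈ Finset.range N,
          ((genChoose m u * genChoose n s : ℚ) : k) •
            φ (n + m + l - s - u) (CA.prod s a (CA.prod u b c)) := by
  -- target-side building blocks
  set T : ℕ → ℕ → M := fun p q => φ (n + m + l - p - q) (CA.prod p a (CA.prod q b c)) with hT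
  set c2 : ℕ → ℕ → ℕ → k := fun p q t =>
    ((genChoose n (p + t) * genChoose (n + m - ((p : ℤ) + (t : ℤ))) (q - t) : ℚ) : k)
      * ((-1 : k) ^ t * ((p + t).choose t : k)) with hc2
  -- Step A: enlarge the outer range from N to 2N
  have stepA : ∑ s ∈ Finset.range N, ∑ u ∈ Finset.range N,
        ((genChoose n s * genChoose (n + m - s) u : ℚ) : k) •
          φ (n + m + l - s - u) (CA.prod u (CA.prod s a b) c)
      = ∑ s ∈ Finset.range (2 * N), ∑ u ∈ Finset.range N,
        ((genChoose n s * genChoose (n + m - s) u : ℚ) : k) •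
          φ (n + m + l - s - u) (CA.prod u (CA.prod s a b) c) := by
    refine Finset.sum_subset (Finset.range_subset_range.mpr (by omega)) ?_
    intro s hs hs'
    simp only [Finset.mem_range] at hs hs'
    have hz : CA.prod s a b = 0 := h1 s (by omega)
    simp [hz]
  rw [stepA]
  -- Step B: expand via conformal associativity
  have stepB : ∀ s ∈ Finset.range (2 * N), ∀ u ∈ Finset.range N,
      ((genChoose n s * genChoose (n + m - s) u : ℚ) : k) •
          φ (n + m + l - s - u) (CA.prod u (CA.prod s a b) c)
        = ∑ t ∈ Finset.range (s + 1), c2 (s - t) (u + t) t • T (s - t) (u + t) := by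
    intro s hs u hu
    rw [hass a b c s u, map_sum, Finset.smul_sum]
    refine Finset.sum_congr rfl fun t ht => ?_
    simp only [Finset.mem_range] at ht
    have hts : t ≤ s := by omega
    have e1 : s - t + t = s := by omega
    have e2 : u + t - t = u := by omega
    have e3 : n + m - (((s - t : ℕ) : ℤ) + (t : ℤ)) = n + m - (s : ℤ) := by omega
    have e4 : n + m + l - ((s - t : ℕ) : ℤ) - ((u + t : ℕ) : ℤ)
        = n + m + l - (s : ℤ) - (u : ℤ) := by omega
    simp only [hc2, hT, e1, e2, e3, e4, map_smul, smul_smul]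
  rw [Finset.sum_congr rfl (fun s hs => Finset.sum_congr rfl (fun u hu => stepB s hs u hu))]
  -- Step C: reindex the triple sum
  have stepC : ∑ s ∈ Finset.range (2 * N), ∑ u ∈ Finset.range N,
        ∑ t ∈ Finset.range (s + 1), c2 (s - t) (u + t) t • T (s - t) (u + t)
      = ∑ p ∈ Finset.range (2 * N), ∑ q ∈ Finset.range (3 * N),
          ∑ t ∈ (Finset.range (q + 1)).filter (fun t => q - t < N ∧ p + t < 2 * N),
            c2 p q t • T p q := by
    rw [← Finset.sum_product' (s := Finset.range (2 * N)) (t := Finset.range N)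
      (f := fun s u => ∑ t ∈ Finset.range (s + 1), c2 (s - t) (u + t) t • T (s - t) (u + t))]
    rw [← Finset.sum_product' (s := Finset.range (2 * N)) (t := Finset.range (3 * N))
      (f := fun p q => ∑ t ∈ (Finset.range (q + 1)).filter
        (fun t => q - t < N ∧ p + t < 2 * N), c2 p q t • T p q)]
    rw [Finset.sum_sigma', Finset.sum_sigma']
    refine Finset.sum_nbij' (fun x => ⟨(x.1.1 - x.2, x.1.2 + x.2), x.2⟩)
      (fun y => ⟨(y.1.1 + y.2, y.1.2 - y.2), y.2⟩) ?_ ?_ ?_ ?_ ?_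
    · rintro ⟨⟨s, u⟩, t⟩ h
      simp only [Finset.mem_sigma, Finset.mem_product, Finset.mem_range, Finset.mem_filter] at h ⊢
      omega
    · rintro ⟨⟨p, q⟩, t⟩ h
      simp only [Finset.mem_sigma, Finset.mem_product, Finset.mem_range, Finset.mem_filter] at h ⊢
      omega
    · rintro ⟨⟨s, u⟩, t⟩ h
      simp only [Finset.mem_sigma, Finset.mem_product, Finset.mem_range] at h
      simp only [Sigma.mk.inj_iff, Prod.mk.injEq, heq_eq_eq]
      refine ⟨⟨by omega, by omega⟩, trivial⟩
    · rintro ⟨⟨p, q⟩, t⟩ h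
      simp only [Finset.mem_sigma, Finset.mem_product, Finset.mem_range, Finset.mem_filter] at h
      simp only [Sigma.mk.inj_iff, Prod.mk.injEq, heq_eq_eq]
      refine ⟨⟨by omega, by omega⟩, trivial⟩
    · rintro ⟨⟨s, u⟩, t⟩ h
      rfl
  rw [stepC]
  -- Step D: pull scalars together
  have stepD : ∀ p ∈ Finset.range (2 * N), ∀ q ∈ Finset.range (3 * N),
      ∑ t ∈ (Finset.range (q + 1)).filter (fun t => q - t < N ∧ p + t < 2 * N),
          c2 p q t • T p q
        = (∑ t ∈ (Finset.range (q + 1)).filter (fun t => q - t < N ∧ p + t < 2 * N),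
            c2 p q t) • T p q := by
    intro p _ q _
    rw [Finset.sum_smul]
  rw [Finset.sum_congr rfl (fun p hp => Finset.sum_congr rfl (fun q hq => stepD p hp q hq))]
  -- Step E: shrink ranges and evaluate the scalar via the key identity
  have hTq : ∀ p q, N ≤ q → T p q = 0 := by
    intro p q hq
    simp only [hT, h2 q hq, map_zero]
  have hTp : ∀ p q, N ≤ p → T p q = 0 := by
    intro p q hp
    simp only [hT, h4 q p hp, map_zero]
  have stepE : ∑ p ∈ Finset.range (2 * N), ∑ q ∈ Finset.range (3 * N),
        (∑ t ∈ (Finset.range (q + 1)).filter (fun t => q - t < N ∧ p + t < 2 * N),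
            c2 p q t) • T p q
      = ∑ p ∈ Finset.range N, ∑ q ∈ Finset.range N,
          ((genChoose n p * genChoose m q : ℚ) : k) • T p q := by
    rw [← Finset.sum_subset (Finset.range_subset_range.mpr (by omega : N ≤ 2 * N)) ?hz]
    case hz =>
      intro p hp hp'
      simp only [Finset.mem_range] at hp hp'
      refine Finset.sum_eq_zero fun q hq => ?_
      rw [hTp p q (by omega), smul_zero]
    refine Finset.sum_congr rfl fun p hp => ?_
    simp only [Finset.mem_range] at hp
    rw [← Finset.sum_subset (Finset.range_subset_range.mpr (by omega : N ≤ 3 * N)) ?hz2]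
    case hz2 =>
      intro q hq hq'
      simp only [Finset.mem_range] at hq hq'
      rw [hTq p q (by omega), smul_zero]
    refine Finset.sum_congr rfl fun q hq => ?_
    simp only [Finset.mem_range] at hq
    congr 1
    have hfil : (Finset.range (q + 1)).filter (fun t => q - t < N ∧ p + t < 2 * N)
        = Finset.range (q + 1) := by
      refine Finset.filter_true_of_mem fun t ht => ?_
      simp only [Finset.mem_range] at ht
      omega
    rw [hfil]
    have hterm : ∀ t ∈ Finset.range (q + 1), c2 p q t
        = (Rat.castHom k) ((-1 : ℚ) ^ t * ((p + t).choose t : ℚ)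
            * (genChoose n (p + t) * genChoose (n + m - ((p : ℤ) + (t : ℤ))) (q - t))) := by
      intro t ht
      have hk : ((-1 : k) ^ t * ((p + t).choose t : k))
          = (((-1 : ℚ) ^ t * ((p + t).choose t : ℚ) : ℚ) : k) := by push_cast; ring
      simp only [hc2, hk, Rat.coe_castHom, ← Rat.cast_mul]
      exact congrArg _ (by ring)
    rw [Finset.sum_congr rfl hterm, ← map_sum, key_identity n m p q, map_mul]
    simp
  rw [stepE]
  -- Step F: compare with the right-hand side
  rw [Finset.sum_comm]
  refine Finset.sum_congr rfl fun u hu => Finset.sum_congr rfl fun s hs => ?_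
  simp only [hT]
  rw [mul_comm]
end

section
/- Let H be a commutative and cocommutative Hopf algebra, A an associative H-comodule algebra, and P(A) = H ⊗ A the pseudoalgebra with pseudoproduct (h⊗a) ∗ (g⊗b) = h·b₍₁₎ ⊗ g·a₍₁₎ ⊗_H (1 ⊗ a₍₂₎b₍₂₎). Then P(A) is associative as a pseudoalgebra: (x ∗ y) ∗ z = x ∗ (y ∗ z) in H^{⊗3} ⊗_H P(A) for all x, y, z ∈ P(A), where the expanded pseudoproduct of F ⊗_H a ∈ H^{⊗n} ⊗_H P and G ⊗_H b ∈ H^{⊗m} ⊗_H P is defined by (F ⊗_H a) ∗ (G ⊗_H b) = (F ⊗ G ⊗_H 1)(Δ^{(n)} ⊗ Δ^{(m)} ⊗_H id)(a ∗ b). -/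
open TensorProduct

set_option maxHeartbeats 1000000
set_option synthInstance.maxHeartbeats 1000000

variable {k H A : Type*} [CommRing k] [CommRing H] [HopfAlgebra k H]
  [NonUnitalRing A] [Module k A] [SMulCommClass k A A] [IsScalarTower k A A]

/-- Swap of the two outer `H`-factors of `H ⊗ (H ⊗ M)`. -/
noncomputable def swapHH (k H : Type*) [CommRing k] [CommRing H] [Algebra k H]
    (M : Type*) [AddCommGroup M] [Module k M] :
    H ⊗[k] (H ⊗[k] M) →ₗ[k] H ⊗[k] (H ⊗[k] M) :=
  (TensorProduct.assoc k H H M).toLinearMap ∘ₗ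
    (LinearMap.rTensor M (TensorProduct.comm k H H).toLinearMap) ∘ₗ
    (TensorProduct.assoc k H H M).symm.toLinearMap

/-- The pseudoproduct on `P(A) = H ⊗ A` attached to a coaction `δ`, under the
identification `(H ⊗ H) ⊗_H (H ⊗ A) ≅ H ⊗ (H ⊗ A)`. -/
noncomputable def pseudoProd (δ : A →ₗ[k] H ⊗[k] A) (x y : H ⊗[k] A) :
    H ⊗[k] (H ⊗[k] A) :=
  (LinearMap.lTensor H δ x) * (swapHH k H A (LinearMap.lTensor H δ y))

/-- The iterated coaction `a ↦ a₍₁₎ ⊗ (a₍₂₎ ⊗ a₍₃₎)`. -/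
noncomputable def coact2 (δ : A →ₗ[k] H ⊗[k] A) : A →ₗ[k] H ⊗[k] (H ⊗[k] A) :=
  (LinearMap.lTensor H δ) ∘ₗ δ

/-- The expanded pseudoproduct `(H² ⊗_H P) ∗ P`, under the identifications
`H² ⊗_H (H ⊗ A) ≅ H ⊗ (H ⊗ A)` and `H³ ⊗_H (H ⊗ A) ≅ H ⊗ (H ⊗ (H ⊗ A))`. -/
noncomputable def expProdL (δ : A →ₗ[k] H ⊗[k] A)
    (X : H ⊗[k] (H ⊗[k] A)) (z : H ⊗[k] A) : H ⊗[k] (H ⊗[k] (H ⊗[k] A)) :=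
  letI : NonUnitalNonAssocSemiring (H ⊗[k] (H ⊗[k] A)) := inferInstance
  (LinearMap.lTensor H (LinearMap.lTensor H δ) X) *
    ((LinearMap.lTensor H (swapHH k H A) ∘ₗ swapHH k H (H ⊗[k] A) ∘ₗ
        LinearMap.lTensor H (coact2 δ)) z)

/-- The expanded pseudoproduct `P ∗ (H² ⊗_H P)`, under the same identifications. -/
noncomputable def expProdR (δ : A →ₗ[k] H ⊗[k] A)
    (x : H ⊗[k] A) (Y : H ⊗[k] (H ⊗[k] A)) : H ⊗[k] (H ⊗[k] (H ⊗[k] A)) :=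
  letI : NonUnitalNonAssocSemiring (H ⊗[k] (H ⊗[k] A)) := inferInstance
  (LinearMap.lTensor H (coact2 δ) x) *
    ((swapHH k H (H ⊗[k] A) ∘ₗ LinearMap.lTensor H (swapHH k H A) ∘ₗ
        LinearMap.lTensor H (LinearMap.lTensor H δ)) Y)

noncomputable instance instNUNNS_T2 : NonUnitalNonAssocSemiring (H ⊗[k] (H ⊗[k] A)) :=
  inferInstance

/-! ### Concrete ring-structure helper lemmas

The ambient instances on the iterated tensor products are synthesized through
non-canonical paths, so we restate the basic algebraic facts concretely (with
the in-context instances) to make them usable by `rw`/`simp only`. -/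

lemma mul_add_T1 (x y z : H ⊗[k] A) : x*(y+z) = x*y + x*z :=
  map_add (Algebra.TensorProduct.mul x) y z

lemma add_mul_T1 (x y z : H ⊗[k] A) : (x+y)*z = x*z + y*z :=
  congrArg (fun f => f z) (map_add (Algebra.TensorProduct.mul (R := k)) x y)

lemma mul_zero_T1 (x : H ⊗[k] A) : x * 0 = 0 :=
  map_zero (Algebra.TensorProduct.mul x)

lemma zero_mul_T1 (x : H ⊗[k] A) : (0 : H ⊗[k] A) * x = 0 :=
  congrArg (fun f => f x) (map_zero (Algebra.TensorProduct.mul (R := k)))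

lemma tmm_T1 (h g : H) (a b : A) :
    (h ⊗ₜ[k] a) * (g ⊗ₜ[k] b) = (h*g) ⊗ₜ[k] (a*b) :=
  Algebra.TensorProduct.tmul_mul_tmul h g a b

lemma mul_add_T2 (x y z : H ⊗[k] (H ⊗[k] A)) : x*(y+z) = x*y + x*z :=
  map_add (Algebra.TensorProduct.mul x) y z

lemma add_mul_T2 (x y z : H ⊗[k] (H ⊗[k] A)) : (x+y)*z = x*z + y*z :=
  congrArg (fun f => f z) (map_add (Algebra.TensorProduct.mul (R := k)) x y)

lemma mul_zero_T2 (x : H ⊗[k] (H ⊗[k] A)) : x * 0 = 0 :=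
  map_zero (Algebra.TensorProduct.mul x)

lemma zero_mul_T2 (x : H ⊗[k] (H ⊗[k] A)) : (0 : H ⊗[k] (H ⊗[k] A)) * x = 0 :=
  congrArg (fun f => f x) (map_zero (Algebra.TensorProduct.mul (R := k)))

lemma tmm_T2 (h g : H) (a b : H ⊗[k] A) :
    (h ⊗ₜ[k] a) * (g ⊗ₜ[k] b) = (h*g) ⊗ₜ[k] (a*b) :=
  Algebra.TensorProduct.tmul_mul_tmul h g a b

lemma mul_add_T3 (x y z : H ⊗[k] (H ⊗[k] (H ⊗[k] A))) : x*(y+z) = x*y + x*z :=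
  map_add (Algebra.TensorProduct.mul x) y z

lemma add_mul_T3 (x y z : H ⊗[k] (H ⊗[k] (H ⊗[k] A))) : (x+y)*z = x*z + y*z :=
  congrArg (fun f => f z) (map_add (Algebra.TensorProduct.mul (R := k)) x y)

lemma mul_zero_T3 (x : H ⊗[k] (H ⊗[k] (H ⊗[k] A))) : x * 0 = 0 :=
  map_zero (Algebra.TensorProduct.mul x)

lemma zero_mul_T3 (x : H ⊗[k] (H ⊗[k] (H ⊗[k] A))) : (0 : H ⊗[k] (H ⊗[k] (H ⊗[k] A))) * x = 0 :=
  congrArg (fun f => f x) (map_zero (Algebra.TensorProduct.mul (R := k)))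

lemma tmm_T3 (h g : H) (a b : H ⊗[k] (H ⊗[k] A)) :
    (h ⊗ₜ[k] a) * (g ⊗ₜ[k] b) = (h*g) ⊗ₜ[k] (a*b) :=
  Algebra.TensorProduct.tmul_mul_tmul h g a b

lemma mul_assoc_T3 (x y z : H ⊗[k] (H ⊗[k] (H ⊗[k] A))) : x*y*z = x*(y*z) := by
  exact Algebra.TensorProduct.mul_assoc (R := k) (A := H) (B := H ⊗[k] (H ⊗[k] A)) x y z

/-! ### Structural lemmas -/

lemma swapHH_tmul {M : Type*} [AddCommGroup M] [Module k M] (h g : H) (m : M) :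
    swapHH k H M (h ⊗ₜ[k] (g ⊗ₜ[k] m)) = g ⊗ₜ[k] (h ⊗ₜ[k] m) := by
  simp [swapHH]

/-- `lTensor H δ` is multiplicative. -/
lemma lTensor_mul_T (δ : A →ₗ[k] H ⊗[k] A)
    (hmul : ∀ a b : A, δ (a * b) = δ a * δ b) (u v : H ⊗[k] A) :
    LinearMap.lTensor H δ (u * v)
      = LinearMap.lTensor H δ u * LinearMap.lTensor H δ v := by
  induction u using TensorProduct.induction_on with
  | zero => rw [zero_mul_T1, map_zero, zero_mul_T2]
  | tmul h b =>
    induction v using TensorProduct.induction_on with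
    | zero => rw [mul_zero_T1, map_zero, mul_zero_T2]
    | tmul g c => simp only [tmm_T1, LinearMap.lTensor_tmul, tmm_T2, hmul]
    | add p q hp hq => rw [mul_add_T1, map_add, hp, hq, map_add, mul_add_T2]
  | add p q hp hq => rw [add_mul_T1, map_add, hp, hq, map_add, add_mul_T2]

/-- `lTensor H (lTensor H δ)` is multiplicative. -/
lemma lTensor_mul_D (δ : A →ₗ[k] H ⊗[k] A)
    (hmul : ∀ a b : A, δ (a * b) = δ a * δ b) (u v : H ⊗[k] (H ⊗[k] A)) :
    LinearMap.lTensor H (LinearMap.lTensor H δ) (u * v)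
      = LinearMap.lTensor H (LinearMap.lTensor H δ) u
        * LinearMap.lTensor H (LinearMap.lTensor H δ) v := by
  induction u using TensorProduct.induction_on with
  | zero => rw [zero_mul_T2, map_zero, zero_mul_T3]
  | tmul h b =>
    induction v using TensorProduct.induction_on with
    | zero => rw [mul_zero_T2, map_zero, mul_zero_T3]
    | tmul g c =>
      simp only [tmm_T2, LinearMap.lTensor_tmul, tmm_T3, lTensor_mul_T δ hmul]
    | add p q hp hq => rw [mul_add_T2, map_add, hp, hq, map_add, mul_add_T3]
  | add p q hp hq => rw [add_mul_T2, map_add, hp, hq, map_add, add_mul_T3]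

/-- `swapHH k H A` is multiplicative. -/
lemma swapHH_mul_A (u v : H ⊗[k] (H ⊗[k] A)) :
    swapHH k H A (u * v) = swapHH k H A u * swapHH k H A v := by
  induction u using TensorProduct.induction_on with
  | zero => rw [zero_mul_T2, map_zero, zero_mul_T2]
  | tmul h w =>
    induction v using TensorProduct.induction_on with
    | zero => rw [mul_zero_T2, map_zero, mul_zero_T2]
    | tmul h' w' =>
      induction w using TensorProduct.induction_on with
      | zero => rw [tmul_zero, zero_mul_T2, map_zero, zero_mul_T2]
      | tmul g b =>
        induction w' using TensorProduct.induction_on with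
        | zero => rw [tmul_zero, mul_zero_T2, map_zero, mul_zero_T2]
        | tmul g' b' =>
          simp only [tmm_T2, tmm_T1, swapHH_tmul]
        | add p q hp hq =>
          rw [tmul_add, mul_add_T2, map_add, hp, hq, map_add, mul_add_T2]
      | add p q hp hq =>
        rw [tmul_add, add_mul_T2, map_add, hp, hq, map_add, add_mul_T2]
    | add p q hp hq => rw [mul_add_T2, map_add, hp, hq, map_add, mul_add_T2]
  | add p q hp hq => rw [add_mul_T2, map_add, hp, hq, map_add, add_mul_T2]

/-- `swapHH k H (H ⊗ A)` is multiplicative. -/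
lemma swapHH_mul_HA (u v : H ⊗[k] (H ⊗[k] (H ⊗[k] A))) :
    swapHH k H (H ⊗[k] A) (u * v)
      = swapHH k H (H ⊗[k] A) u * swapHH k H (H ⊗[k] A) v := by
  induction u using TensorProduct.induction_on with
  | zero => rw [zero_mul_T3, map_zero, zero_mul_T3]
  | tmul h w =>
    induction v using TensorProduct.induction_on with
    | zero => rw [mul_zero_T3, map_zero, mul_zero_T3]
    | tmul h' w' =>
      induction w using TensorProduct.induction_on with
      | zero => rw [tmul_zero, zero_mul_T3, map_zero, zero_mul_T3]
      | tmul g b =>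
        induction w' using TensorProduct.induction_on with
        | zero => rw [tmul_zero, mul_zero_T3, map_zero, mul_zero_T3]
        | tmul g' b' =>
          simp only [tmm_T3, tmm_T2, swapHH_tmul]
        | add p q hp hq =>
          rw [tmul_add, mul_add_T3, map_add, hp, hq, map_add, mul_add_T3]
      | add p q hp hq =>
        rw [tmul_add, add_mul_T3, map_add, hp, hq, map_add, add_mul_T3]
    | add p q hp hq => rw [mul_add_T3, map_add, hp, hq, map_add, mul_add_T3]
  | add p q hp hq => rw [add_mul_T3, map_add, hp, hq, map_add, add_mul_T3]

/-- `lTensor H (swapHH k H A)` is multiplicative. -/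
lemma lTensor_mul_W (u v : H ⊗[k] (H ⊗[k] (H ⊗[k] A))) :
    LinearMap.lTensor H (swapHH k H A) (u * v)
      = LinearMap.lTensor H (swapHH k H A) u
        * LinearMap.lTensor H (swapHH k H A) v := by
  induction u using TensorProduct.induction_on with
  | zero => rw [zero_mul_T3, map_zero, zero_mul_T3]
  | tmul h b =>
    induction v using TensorProduct.induction_on with
    | zero => rw [mul_zero_T3, map_zero, mul_zero_T3]
    | tmul g c =>
      simp only [tmm_T3, LinearMap.lTensor_tmul, swapHH_mul_A]
    | add p q hp hq => rw [mul_add_T3, map_add, hp, hq, map_add, mul_add_T3]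
  | add p q hp hq => rw [add_mul_T3, map_add, hp, hq, map_add, add_mul_T3]

/-- Naturality: applying a map to the inner factor commutes with `swapHH`. -/
lemma swapHH_natural {M N : Type*} [AddCommGroup M] [Module k M]
    [AddCommGroup N] [Module k N] (f : M →ₗ[k] N) (u : H ⊗[k] (H ⊗[k] M)) :
    LinearMap.lTensor H (LinearMap.lTensor H f) (swapHH k H M u)
      = swapHH k H N (LinearMap.lTensor H (LinearMap.lTensor H f) u) := by
  induction u using TensorProduct.induction_on with
  | zero => simp
  | tmul h w =>
    induction w using TensorProduct.induction_on with
    | zero => simp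
    | tmul g m => simp [swapHH_tmul]
    | add p q hp hq => simp only [tmul_add, map_add, hp, hq]
  | add p q hp hq => simp [hp, hq]

/-- The braid relation for the two adjacent transpositions on `H ⊗ H ⊗ H ⊗ M`. -/
lemma swapHH_braid {M : Type*} [AddCommGroup M] [Module k M]
    (u : H ⊗[k] (H ⊗[k] (H ⊗[k] M))) :
    swapHH k H (H ⊗[k] M) (LinearMap.lTensor H (swapHH k H M)
        (swapHH k H (H ⊗[k] M) u))
      = LinearMap.lTensor H (swapHH k H M) (swapHH k H (H ⊗[k] M)
        (LinearMap.lTensor H (swapHH k H M) u)) := by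
  induction u using TensorProduct.induction_on with
  | zero => simp
  | tmul h v =>
    induction v using TensorProduct.induction_on with
    | zero => simp
    | tmul g w =>
      induction w using TensorProduct.induction_on with
      | zero => simp
      | tmul f m => simp [swapHH_tmul]
      | add p q hp hq => simp only [tmul_add, map_add, hp, hq]
    | add p q hp hq => simp only [tmul_add, map_add, hp, hq]
  | add p q hp hq => simp [hp, hq]

/-- Coassociativity plus cocommutativity make `coact2` symmetric in its first
two `H`-legs. -/
lemma coact2_symm (δ : A →ₗ[k] H ⊗[k] A)
    (hcoassoc : ∀ a : A,
      (LinearMap.rTensor A (Coalgebra.comul (R := k) (A := H))) (δ a)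
        = (TensorProduct.assoc k H H A).symm ((LinearMap.lTensor H δ) (δ a)))
    (hcocomm : ∀ h : H,
      (TensorProduct.comm k H H) (Coalgebra.comul (R := k) h) = Coalgebra.comul h)
    (a : A) : swapHH k H A (coact2 δ a) = coact2 δ a := by
  have h1 : coact2 δ a
      = (TensorProduct.assoc k H H A)
          ((LinearMap.rTensor A (Coalgebra.comul (R := k) (A := H))) (δ a)) := by
    rw [hcoassoc a]
    simp [coact2]
  have hcc : (TensorProduct.comm k H H).toLinearMap ∘ₗ
      (Coalgebra.comul (R := k) (A := H)) = Coalgebra.comul := LinearMap.ext hcocomm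
  rw [h1]
  simp only [swapHH, LinearMap.comp_apply, LinearEquiv.coe_coe,
    LinearEquiv.symm_apply_apply]
  rw [← LinearMap.comp_apply, ← LinearMap.rTensor_comp, hcc]

/-- for a commutative cocommutative Hopf algebra `H` and an
associative `H`-comodule algebra `A`, the pseudoalgebra `P(A) = H ⊗ A` is
associative: `(x ∗ y) ∗ z = x ∗ (y ∗ z)` in `H^{⊗3} ⊗_H P(A)`. -/
theorem pseudoProd_associative (δ : A →ₗ[k] H ⊗[k] A)
    (hmul : ∀ a b : A, δ (a * b) = δ a * δ b)
    (hcoassoc : ∀ a : A,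
      (LinearMap.rTensor A (Coalgebra.comul (R := k) (A := H))) (δ a)
        = (TensorProduct.assoc k H H A).symm ((LinearMap.lTensor H δ) (δ a)))
    (hcounit : ∀ a : A,
      (TensorProduct.lid k A)
        ((LinearMap.rTensor A (Coalgebra.counit (R := k) (A := H))) (δ a)) = a)
    (hcocomm : ∀ h : H,
      (TensorProduct.comm k H H) (Coalgebra.comul (R := k) h) = Coalgebra.comul h) :
    ∀ x y z : H ⊗[k] A,
      expProdL δ (pseudoProd δ x y) z = expProdR δ x (pseudoProd δ y z) := by
  intro x y z
  have hDT : ∀ u : H ⊗[k] A,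
      LinearMap.lTensor H (LinearMap.lTensor H δ) (LinearMap.lTensor H δ u)
        = LinearMap.lTensor H (coact2 δ) u := by
    intro u
    rw [← LinearMap.lTensor_comp_apply]
    rfl
  have htE : ∀ u : H ⊗[k] A,
      LinearMap.lTensor H (swapHH k H A) (LinearMap.lTensor H (coact2 δ) u)
        = LinearMap.lTensor H (coact2 δ) u := by
    intro u
    rw [← LinearMap.lTensor_comp_apply]
    have h2 : swapHH k H A ∘ₗ coact2 δ = coact2 δ :=
      LinearMap.ext (coact2_symm δ hcoassoc hcocomm)
    rw [h2]
  simp only [expProdL, expProdR, pseudoProd, LinearMap.comp_apply]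
  rw [lTensor_mul_D δ hmul, hDT, swapHH_natural δ, hDT,
    lTensor_mul_D δ hmul, hDT, swapHH_natural δ, hDT,
    lTensor_mul_W, swapHH_mul_HA, htE, swapHH_braid, htE, mul_assoc_T3]
end

section
/- Let C be a conformal algebra over a field k of characteristic 0 and define the pseudoproduct a ∗ b = ∑_{s≥0} ((−D)^s/s!) ⊗ 1 ⊗_{k[D]} (a ∘ₛ b) ∈ (k[D] ⊗ k[D]) ⊗_{k[D]} C. Then the sesquilinearity axioms (Da) ∘ₙ b = −n a ∘_{n−1} b and a ∘ₙ (Db) = D(a ∘ₙ b) + n a ∘_{n−1} b are equivalent to the H-bilinearity of ∗: (f(D)a) ∗ (g(D)b) = (f(D) ⊗ g(D) ⊗_{k[D]} 1)(a ∗ b) for all polynomials f, g ∈ k[D]. -/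
open Polynomial TensorProduct

set_option maxHeartbeats 1000000

section CC16sec

variable {k C : Type*} [Field k] [CharZero k] [AddCommGroup C] [Module k C]
    [Module (Polynomial k) C] [IsScalarTower k (Polynomial k) C]
    (prod : ℕ → C →ₗ[k] C →ₗ[k] C)

/-- factorial product identity -/
lemma CC16_fact_prod (m p : ℕ) :
    (m.factorial : k) * ∏ j ∈ Finset.range p, (((m + p : ℕ) : k) - j)
      = ((m + p).factorial : k) := by
  induction p with
  | zero => simp
  | succ p ih =>
      rw [Finset.prod_range_succ']
      have h1 : ∀ j ∈ Finset.range p, ((m + (p+1) : ℕ) : k) - (((j+1 : ℕ)) : k)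
          = ((m + p : ℕ) : k) - j := by
        intro j _; push_cast; ring
      rw [Finset.prod_congr rfl h1]
      have hf : ((m + (p+1)).factorial : k) = ((m+p).factorial : k) * ((m+p : ℕ) + 1 : k) := by
        rw [show m+(p+1) = (m+p)+1 from rfl, Nat.factorial_succ]; push_cast; ring
      rw [hf, ← ih]; push_cast; ring

/-- sesquilinearity in left argument, iterated -/
lemma CC16_left_iter
    (h1 : ∀ a b : C, prod 0 ((X : Polynomial k) • a) b = 0)
    (h2 : ∀ (n : ℕ) (a b : C),
        prod (n + 1) ((X : Polynomial k) • a) b = -(((n : ℕ) + 1 : k)) • prod n a b)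
    (p s : ℕ) (a b : C) :
    prod s ((X ^ p : Polynomial k) • a) b
      = ((-1 : k) ^ p * ∏ j ∈ Finset.range p, ((s : k) - j)) • prod (s - p) a b := by
  induction p generalizing s with
  | zero => simp
  | succ p ih =>
      have hx : (X ^ (p+1) : Polynomial k) • a = (X : Polynomial k) • ((X ^ p : Polynomial k) • a) := by
        rw [← mul_smul, ← pow_succ']
      rw [hx]
      cases s with
      | zero =>
          rw [h1]
          have : ((0:ℕ) : k) - ((0:ℕ) : k) = 0 := by simp
          rw [Finset.prod_eq_zero (Finset.mem_range.mpr (Nat.succ_pos p)) (by simp)]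
          simp
      | succ n =>
          rw [h2, ih, Finset.prod_range_succ']
          have h1' : ∀ j ∈ Finset.range p, (((n+1 : ℕ)) : k) - (((j+1 : ℕ)) : k)
              = ((n : ℕ) : k) - j := by
            intro j _; push_cast; ring
          rw [Finset.prod_congr rfl h1']
          rw [smul_smul, Nat.succ_sub_succ]
          congr 1
          push_cast
          ring

/-- unified right sesquilinearity -/
lemma CC16_right_one
    (h3 : ∀ a b : C, prod 0 a ((X : Polynomial k) • b) = (X : Polynomial k) • prod 0 a b)
    (h4 : ∀ (n : ℕ) (a b : C),
        prod (n + 1) a ((X : Polynomial k) • b)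
          = (X : Polynomial k) • prod (n + 1) a b + (((n : ℕ) + 1 : k)) • prod n a b)
    (s : ℕ) (a c : C) :
    prod s a ((X : Polynomial k) • c)
      = (X : Polynomial k) • prod s a c + (s : k) • prod (s - 1) a c := by
  cases s with
  | zero => simp [h3]
  | succ n => rw [h4]; push_cast; simp


/-- right sesquilinearity, iterated -/
lemma CC16_right_iter
    (h3 : ∀ a b : C, prod 0 a ((X : Polynomial k) • b) = (X : Polynomial k) • prod 0 a b)
    (h4 : ∀ (n : ℕ) (a b : C),
        prod (n + 1) a ((X : Polynomial k) • b)
          = (X : Polynomial k) • prod (n + 1) a b + (((n : ℕ) + 1 : k)) • prod n a b)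
    (q s : ℕ) (a b : C) :
    prod s a ((X ^ q : Polynomial k) • b)
      = ∑ i ∈ Finset.range (q + 1),
          ((q.choose i : k) * ∏ j ∈ Finset.range i, ((s : k) - j)) •
            ((X ^ (q - i) : Polynomial k) • prod (s - i) a b) := by
  induction q generalizing s with
  | zero => simp
  | succ q ih =>
      have hx : (X ^ (q+1) : Polynomial k) • b
          = (X : Polynomial k) • ((X ^ q : Polynomial k) • b) := by
        rw [← mul_smul, ← pow_succ']
      rw [hx, CC16_right_one prod h3 h4, ih, ih]
      -- abbreviation for the common term shape
      set T : ℕ → C := fun i =>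
        (∏ j ∈ Finset.range i, ((s : k) - j)) •
          ((X ^ (q + 1 - i) : Polynomial k) • prod (s - i) a b) with hT
      -- first summand
      have e1 : (X : Polynomial k) • ∑ i ∈ Finset.range (q + 1),
            ((q.choose i : k) * ∏ j ∈ Finset.range i, ((s : k) - j)) •
              ((X ^ (q - i) : Polynomial k) • prod (s - i) a b)
          = ∑ i ∈ Finset.range (q + 1), (q.choose i : k) • T i := by
        rw [Finset.smul_sum]
        refine Finset.sum_congr rfl fun i hi => ?_
        have hiq : i ≤ q := Nat.lt_succ_iff.mp (Finset.mem_range.mp hi)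
        rw [smul_comm (X : Polynomial k), hT]
        simp only []
        rw [← mul_smul, ← pow_succ', smul_smul, show q - i + 1 = q + 1 - i by omega]
      -- second summand
      have e2 : (s : k) • ∑ i ∈ Finset.range (q + 1),
            ((q.choose i : k) * ∏ j ∈ Finset.range i, (((s-1 : ℕ) : k) - j)) •
              ((X ^ (q - i) : Polynomial k) • prod (s - 1 - i) a b)
          = ∑ i ∈ Finset.range (q + 1), (q.choose i : k) • T (i+1) := by
        rw [Finset.smul_sum]
        refine Finset.sum_congr rfl fun i hi => ?_
        have key : (s : k) * ∏ j ∈ Finset.range i, (((s-1 : ℕ) : k) - j)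
            = ∏ j ∈ Finset.range (i+1), ((s : k) - j) := by
          cases s with
          | zero =>
              have hz : ∏ j ∈ Finset.range (i+1), (((0:ℕ):k) - (j:k)) = 0 :=
                Finset.prod_eq_zero (Finset.mem_range.mpr (Nat.succ_pos i)) (by simp)
              rw [hz]; simp
          | succ m =>
              rw [Finset.prod_range_succ']
              have hc : ∀ j ∈ Finset.range i, (((m+1 : ℕ)) : k) - (((j+1 : ℕ)) : k)
                  = (((m+1-1 : ℕ)) : k) - j := by
                intro j _; push_cast; ring
              rw [Finset.prod_congr rfl hc]
              push_cast
              ring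
        rw [hT]
        simp only []
        rw [smul_smul, smul_smul, mul_left_comm, key,
          show q + 1 - (i+1) = q - i by omega, show s - (i+1) = s - 1 - i by omega]
      rw [e1, e2]
      have hR : ∑ i ∈ Finset.range (q+1+1),
          (((q+1).choose i : k) * ∏ j ∈ Finset.range i, ((s : k) - j)) •
            ((X ^ (q + 1 - i) : Polynomial k) • prod (s - i) a b)
          = ∑ i ∈ Finset.range (q+2), (((q+1).choose i : k)) • T i := by
        refine Finset.sum_congr rfl fun i _ => ?_
        rw [hT]
        simp only []
        rw [mul_smul]
      rw [hR, Finset.sum_range_succ' (fun i => (((q+1).choose i : k)) • T i) (q+1)]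
      have hP : ∀ i ∈ Finset.range (q+1), (((q+1).choose (i+1) : k)) • T (i+1)
          = (q.choose i : k) • T (i+1) + (q.choose (i+1) : k) • T (i+1) := by
        intro i _
        rw [Nat.choose_succ_succ]
        push_cast
        rw [add_smul]
      rw [Finset.sum_congr rfl hP, Finset.sum_add_distrib]
      have hL2 : ∑ i ∈ Finset.range (q+1), (q.choose (i+1) : k) • T (i+1)
          = ∑ i ∈ Finset.range q, (q.choose (i+1) : k) • T (i+1) := by
        rw [Finset.sum_range_succ]
        simp
      rw [hL2, show (((q+1).choose 0 : ℕ) : k) = ((q.choose 0 : ℕ) : k) by simp]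
      rw [Finset.sum_range_succ' (fun i => (q.choose i : k) • T i) q]
      abel


noncomputable def CC16_coeffMap (k : Type*) [CommSemiring k] (C : Type*) [AddCommMonoid C]
    [Module k C] (n : ℕ) : Polynomial k ⊗[k] C →ₗ[k] C :=
  (TensorProduct.lid k C).toLinearMap ∘ₗ LinearMap.rTensor C (Polynomial.lcoeff k n)

lemma CC16_coeffMap_tmul (n : ℕ) (f : Polynomial k) (c : C) :
    CC16_coeffMap k C n (f ⊗ₜ[k] c) = (f.coeff n) • c := by
  simp [CC16_coeffMap]

lemma CC16_coeffMap_smul_tmul (n : ℕ) (c : k) (e : ℕ) (v : C) :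
    CC16_coeffMap k C n (c • ((X ^ e : Polynomial k) ⊗ₜ[k] v))
      = if n = e then c • v else 0 := by
  rw [map_smul, CC16_coeffMap_tmul, coeff_X_pow]
  by_cases h : n = e <;> simp [h]


lemma CC16_backward
    (hloc : ∀ a b : C, ∃ N : ℕ, ∀ s, N ≤ s → prod s a b = 0)
    (hbil : ∀ (a b : C) (p q N : ℕ),
      (∀ s, N ≤ s →
        prod s ((X ^ p : Polynomial k) • a) ((X ^ q : Polynomial k) • b) = 0 ∧
        prod s a b = 0) →
      ∑ s ∈ Finset.range N, ((-1 : k) ^ s * ((s.factorial : k))⁻¹) •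
          ((X ^ s : Polynomial k) ⊗ₜ[k]
            prod s ((X ^ p : Polynomial k) • a) ((X ^ q : Polynomial k) • b))
        = ∑ s ∈ Finset.range N, ∑ i ∈ Finset.range (q + 1),
            ((-1 : k) ^ (s + i) * (q.choose i : k) * ((s.factorial : k))⁻¹) •
              ((X ^ (p + s + i) : Polynomial k) ⊗ₜ[k]
                ((X ^ (q - i) : Polynomial k) • prod s a b))) :
    ((∀ a b : C, prod 0 ((X : Polynomial k) • a) b = 0) ∧
     (∀ (n : ℕ) (a b : C),
        prod (n + 1) ((X : Polynomial k) • a) b = -(((n : ℕ) + 1 : k)) • prod n a b) ∧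
     (∀ a b : C,
        prod 0 a ((X : Polynomial k) • b) = (X : Polynomial k) • prod 0 a b) ∧
     (∀ (n : ℕ) (a b : C),
        prod (n + 1) a ((X : Polynomial k) • b)
          = (X : Polynomial k) • prod (n + 1) a b + (((n : ℕ) + 1 : k)) • prod n a b)) := by
  have hfac : ∀ m : ℕ, ((m.factorial : k)) ≠ 0 :=
    fun m => Nat.cast_ne_zero.mpr m.factorial_pos.ne'
  have hc : ∀ m : ℕ, ((-1 : k) ^ m * ((m.factorial : k))⁻¹) ≠ 0 :=
    fun m => mul_ne_zero (pow_ne_zero _ (by norm_num)) (inv_ne_zero (hfac m))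
  refine ⟨?_, ?_, ?_, ?_⟩
  · -- axiom 1
    intro a b
    obtain ⟨N₁, hN₁⟩ := hloc a b
    obtain ⟨N₂, hN₂⟩ := hloc ((X : Polynomial k) • a) b
    have h := hbil a b 1 0 (max N₁ N₂ + 1)
      (fun s hs => ⟨by simpa [pow_one, pow_zero, one_smul] using hN₂ s (by omega),
        hN₁ s (by omega)⟩)
    have h0 := congrArg (CC16_coeffMap k C 0) h
    rw [map_sum, map_sum] at h0
    simp only [map_sum, CC16_coeffMap_smul_tmul, pow_one, pow_zero, one_smul,
      Finset.sum_range_one, add_zero, zero_add, Nat.choose_self, Nat.cast_one, mul_one,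
      Nat.sub_zero, Nat.sub_self] at h0
    rw [Finset.sum_ite_eq (Finset.range (max N₁ N₂ + 1)) 0] at h0
    rw [Finset.sum_congr rfl
      (fun s _ => if_neg (by omega) :
        ∀ s ∈ Finset.range (max N₁ N₂ + 1),
          (if 0 = 1 + s then ((-1 : k) ^ s * ((s.factorial : k))⁻¹) • prod s a b else 0) = 0),
      Finset.sum_const_zero] at h0
    rw [if_pos (Finset.mem_range.mpr (by omega))] at h0
    simpa using h0
  · -- axiom 2
    intro n a b
    obtain ⟨N₁, hN₁⟩ := hloc a b
    obtain ⟨N₂, hN₂⟩ := hloc ((X : Polynomial k) • a) b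
    have h := hbil a b 1 0 (max N₁ N₂ + n + 2)
      (fun s hs => ⟨by simpa [pow_one, pow_zero, one_smul] using hN₂ s (by omega),
        hN₁ s (by omega)⟩)
    have h0 := congrArg (CC16_coeffMap k C (n + 1)) h
    rw [map_sum, map_sum] at h0
    simp only [map_sum, CC16_coeffMap_smul_tmul, pow_one, pow_zero, one_smul,
      Finset.sum_range_one, add_zero, zero_add, Nat.choose_self, Nat.cast_one, mul_one,
      Nat.sub_zero, Nat.sub_self] at h0
    rw [Finset.sum_ite_eq (Finset.range (max N₁ N₂ + n + 2)) (n + 1)] at h0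
    rw [Finset.sum_congr rfl
      (fun s _ => if_congr (by omega) rfl rfl :
        ∀ s ∈ Finset.range (max N₁ N₂ + n + 2),
          (if n + 1 = 1 + s then ((-1 : k) ^ s * ((s.factorial : k))⁻¹) • prod s a b else 0)
          = (if n = s then ((-1 : k) ^ s * ((s.factorial : k))⁻¹) • prod s a b else 0)),
      Finset.sum_ite_eq (Finset.range (max N₁ N₂ + n + 2)) n] at h0
    rw [if_pos (Finset.mem_range.mpr (by omega)), if_pos (Finset.mem_range.mpr (by omega))] at h0
    rw [show ((-1 : k) ^ n * ((n.factorial : k))⁻¹)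
        = ((-1 : k) ^ (n+1) * (((n+1).factorial : k))⁻¹) * (-(((n : ℕ) : k) + 1)) from by
      rw [pow_succ, Nat.factorial_succ]
      have h1 := hfac n
      have h2 : (((n : ℕ) : k) + 1) ≠ 0 := Nat.cast_add_one_ne_zero n
      push_cast
      field_simp] at h0
    rw [mul_smul ((-1 : k) ^ (n+1) * (((n+1).factorial : k))⁻¹) (-(((n : ℕ) : k) + 1))] at h0
    exact smul_right_injective C (hc (n+1)) h0
  · -- axiom 3
    intro a b
    obtain ⟨N₁, hN₁⟩ := hloc a b
    obtain ⟨N₂, hN₂⟩ := hloc a ((X : Polynomial k) • b)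
    have h := hbil a b 0 1 (max N₁ N₂ + 1)
      (fun s hs => ⟨by simpa [pow_one, pow_zero, one_smul] using hN₂ s (by omega),
        hN₁ s (by omega)⟩)
    have expand : ∀ (f : ℕ → Polynomial k ⊗[k] C),
        ∑ i ∈ Finset.range (1 + 1), f i = f 0 + f 1 := fun f => by
      rw [Finset.sum_range_succ, Finset.sum_range_one]
    simp only [expand] at h
    have h0 := congrArg (CC16_coeffMap k C 0) h
    rw [map_sum, map_sum] at h0
    simp only [map_add, CC16_coeffMap_smul_tmul, pow_one, pow_zero, one_smul,
      add_zero, zero_add, Nat.choose_self, Nat.choose_zero_right, Nat.cast_one, mul_one,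
      Nat.sub_zero, Nat.sub_self] at h0
    rw [Finset.sum_add_distrib] at h0
    rw [Finset.sum_ite_eq (Finset.range (max N₁ N₂ + 1)) 0] at h0
    rw [Finset.sum_congr rfl
      (fun s _ => if_neg (by omega) :
        ∀ s ∈ Finset.range (max N₁ N₂ + 1),
          (if 0 = s + 1 then ((-1 : k) ^ (s + 1) * ((s.factorial : k))⁻¹) • prod s a b else 0) = 0),
      Finset.sum_const_zero] at h0
    rw [Finset.sum_ite_eq (Finset.range (max N₁ N₂ + 1)) 0] at h0
    rw [if_pos (Finset.mem_range.mpr (by omega)), if_pos (Finset.mem_range.mpr (by omega))] at h0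
    simpa using h0
  · -- axiom 4
    intro n a b
    obtain ⟨N₁, hN₁⟩ := hloc a b
    obtain ⟨N₂, hN₂⟩ := hloc a ((X : Polynomial k) • b)
    have h := hbil a b 0 1 (max N₁ N₂ + n + 2)
      (fun s hs => ⟨by simpa [pow_one, pow_zero, one_smul] using hN₂ s (by omega),
        hN₁ s (by omega)⟩)
    have expand : ∀ (f : ℕ → Polynomial k ⊗[k] C),
        ∑ i ∈ Finset.range (1 + 1), f i = f 0 + f 1 := fun f => by
      rw [Finset.sum_range_succ, Finset.sum_range_one]
    simp only [expand] at h
    have h0 := congrArg (CC16_coeffMap k C (n + 1)) h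
    rw [map_sum, map_sum] at h0
    simp only [map_add, CC16_coeffMap_smul_tmul, pow_one, pow_zero, one_smul,
      add_zero, zero_add, Nat.choose_self, Nat.choose_zero_right, Nat.cast_one, mul_one,
      Nat.sub_zero, Nat.sub_self] at h0
    rw [Finset.sum_add_distrib] at h0
    rw [Finset.sum_ite_eq (Finset.range (max N₁ N₂ + n + 2)) (n + 1)] at h0
    rw [Finset.sum_congr rfl
      (fun s _ => if_congr (by omega) rfl rfl :
        ∀ s ∈ Finset.range (max N₁ N₂ + n + 2),
          (if n + 1 = s + 1 then ((-1 : k) ^ (s + 1) * ((s.factorial : k))⁻¹) • prod s a b else 0)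
          = (if n = s then ((-1 : k) ^ (s + 1) * ((s.factorial : k))⁻¹) • prod s a b else 0)),
      Finset.sum_ite_eq (Finset.range (max N₁ N₂ + n + 2)) n] at h0
    rw [Finset.sum_ite_eq (Finset.range (max N₁ N₂ + n + 2)) (n + 1)] at h0
    rw [if_pos (Finset.mem_range.mpr (by omega)), if_pos (Finset.mem_range.mpr (by omega)),
      if_pos (Finset.mem_range.mpr (by omega))] at h0
    rw [show ((-1 : k) ^ (n + 1) * ((n.factorial : k))⁻¹)
        = ((-1 : k) ^ (n+1) * (((n+1).factorial : k))⁻¹) * ((((n : ℕ) : k)) + 1) from by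
      rw [Nat.factorial_succ]
      have h1 := hfac n
      have h2 : (((n : ℕ) : k) + 1) ≠ 0 := Nat.cast_add_one_ne_zero n
      push_cast
      field_simp] at h0
    rw [mul_smul ((-1 : k) ^ (n+1) * (((n+1).factorial : k))⁻¹) ((((n : ℕ) : k)) + 1),
      ← smul_add] at h0
    exact smul_right_injective C (hc (n+1)) h0


lemma CC16_forward
    (h1 : ∀ a b : C, prod 0 ((X : Polynomial k) • a) b = 0)
    (h2 : ∀ (n : ℕ) (a b : C),
        prod (n + 1) ((X : Polynomial k) • a) b = -(((n : ℕ) + 1 : k)) • prod n a b)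
    (h3 : ∀ a b : C, prod 0 a ((X : Polynomial k) • b) = (X : Polynomial k) • prod 0 a b)
    (h4 : ∀ (n : ℕ) (a b : C),
        prod (n + 1) a ((X : Polynomial k) • b)
          = (X : Polynomial k) • prod (n + 1) a b + (((n : ℕ) + 1 : k)) • prod n a b)
    (a b : C) (p q N : ℕ)
    (hvan : ∀ s, N ≤ s →
        prod s ((X ^ p : Polynomial k) • a) ((X ^ q : Polynomial k) • b) = 0 ∧
        prod s a b = 0) :
    ∑ s ∈ Finset.range N, ((-1 : k) ^ s * ((s.factorial : k))⁻¹) •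
        ((X ^ s : Polynomial k) ⊗ₜ[k]
          prod s ((X ^ p : Polynomial k) • a) ((X ^ q : Polynomial k) • b))
      = ∑ s ∈ Finset.range N, ∑ i ∈ Finset.range (q + 1),
          ((-1 : k) ^ (s + i) * (q.choose i : k) * ((s.factorial : k))⁻¹) •
            ((X ^ (p + s + i) : Polynomial k) ⊗ₜ[k]
              ((X ^ (q - i) : Polynomial k) • prod s a b)) := by
  have hfac : ∀ m : ℕ, ((m.factorial : k)) ≠ 0 :=
    fun m => Nat.cast_ne_zero.mpr m.factorial_pos.ne'
  set M := N + (p + q + 1) with hM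
  -- extend the left sum to `range M`
  refine Eq.trans (Finset.sum_subset (Finset.range_subset_range.mpr (show N ≤ M by omega))
      (fun s _ hs => by
        rw [(hvan s (le_of_not_gt (fun hlt => hs (Finset.mem_range.mpr hlt)))).1]
        simp)) ?_
  -- extend the right sum to `range M`
  refine Eq.trans ?_ (Finset.sum_subset (Finset.range_subset_range.mpr (show N ≤ M by omega))
      (fun s _ hs => by
        rw [(hvan s (le_of_not_gt (fun hlt => hs (Finset.mem_range.mpr hlt)))).2]
        simp)).symm
  -- rewrite the left-hand terms
  have hL : ∀ s : ℕ, ((-1 : k) ^ s * ((s.factorial : k))⁻¹) •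
        ((X ^ s : Polynomial k) ⊗ₜ[k]
          prod s ((X ^ p : Polynomial k) • a) ((X ^ q : Polynomial k) • b))
      = ∑ i ∈ Finset.range (q + 1),
          (((-1 : k) ^ s * ((s.factorial : k))⁻¹) *
            ((-1 : k) ^ p * ∏ j ∈ Finset.range p, ((s : k) - j)) *
            ((q.choose i : k) * ∏ j ∈ Finset.range i, (((s - p : ℕ) : k) - j))) •
          ((X ^ s : Polynomial k) ⊗ₜ[k]
            ((X ^ (q - i) : Polynomial k) • prod (s - p - i) a b)) := by
    intro s
    rw [CC16_left_iter prod h1 h2 p s a, CC16_right_iter prod h3 h4 q (s - p) a b]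
    rw [TensorProduct.tmul_smul, TensorProduct.tmul_sum, Finset.smul_sum, Finset.smul_sum]
    refine Finset.sum_congr rfl fun i _ => ?_
    rw [TensorProduct.tmul_smul, smul_smul, smul_smul]
  rw [Finset.sum_congr rfl (fun s _ => hL s)]
  conv_lhs => rw [Finset.sum_comm]
  conv_rhs => rw [Finset.sum_comm]
  refine Finset.sum_congr rfl fun i hi => ?_
  have hiq : i ≤ q := Nat.lt_succ_iff.mp (Finset.mem_range.mp hi)
  -- extend the inner left sum to `range ((p + i) + M)`
  refine Eq.trans (Finset.sum_subset (Finset.range_subset_range.mpr (show M ≤ (p + i) + M by omega))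
      (fun s _ hs => by
        have hsM : M ≤ s := le_of_not_gt (fun hlt => hs (Finset.mem_range.mpr hlt))
        rw [(hvan (s - p - i) (by omega)).2]
        simp)) ?_
  rw [Finset.sum_range_add (fun s => (((-1 : k) ^ s * ((s.factorial : k))⁻¹) *
            ((-1 : k) ^ p * ∏ j ∈ Finset.range p, ((s : k) - j)) *
            ((q.choose i : k) * ∏ j ∈ Finset.range i, (((s - p : ℕ) : k) - j))) •
          ((X ^ s : Polynomial k) ⊗ₜ[k]
            ((X ^ (q - i) : Polynomial k) • prod (s - p - i) a b))) (p + i) M]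
  have hzero : ∑ s ∈ Finset.range (p + i), (((-1 : k) ^ s * ((s.factorial : k))⁻¹) *
            ((-1 : k) ^ p * ∏ j ∈ Finset.range p, ((s : k) - j)) *
            ((q.choose i : k) * ∏ j ∈ Finset.range i, (((s - p : ℕ) : k) - j))) •
          ((X ^ s : Polynomial k) ⊗ₜ[k]
            ((X ^ (q - i) : Polynomial k) • prod (s - p - i) a b)) = 0 := by
    refine Finset.sum_eq_zero fun s hs => ?_
    have hs' : s < p + i := Finset.mem_range.mp hs
    rcases lt_or_ge s p with hsp | hsp
    · rw [Finset.prod_eq_zero (Finset.mem_range.mpr hsp)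
        (show ((s : k) - (s : ℕ)) = 0 by simp)]
      simp
    · rw [Finset.prod_eq_zero (Finset.mem_range.mpr (show s - p < i by omega))
        (show (((s - p : ℕ) : k) - ((s - p : ℕ) : k)) = 0 by simp)]
      simp
  rw [hzero, zero_add]
  refine Finset.sum_congr rfl fun t _ => ?_
  -- now match the individual terms
  rw [show p + i + t - p - i = t from by omega, show p + i + t - p = t + i from by omega]
  have hs1 : ((t + i).factorial : k) * ∏ j ∈ Finset.range p, (((p + i + t : ℕ) : k) - j)
      = ((p + i + t).factorial : k) := by
    have h := CC16_fact_prod (k := k) (t + i) p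
    rw [show t + i + p = p + i + t from by omega] at h
    exact h
  have hs2 : (t.factorial : k) * ∏ j ∈ Finset.range i, (((t + i : ℕ) : k) - j)
      = ((t + i).factorial : k) := CC16_fact_prod t i
  have key : ((p + i + t).factorial : k)
      = (t.factorial : k) * (∏ j ∈ Finset.range i, (((t + i : ℕ) : k) - j)) *
        (∏ j ∈ Finset.range p, (((p + i + t : ℕ) : k) - j)) := by
    rw [← hs1, ← hs2]
  have hne : (t.factorial : k) * (∏ j ∈ Finset.range i, (((t + i : ℕ) : k) - j)) *
        (∏ j ∈ Finset.range p, (((p + i + t : ℕ) : k) - j)) ≠ 0 := by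
    rw [← key]; exact hfac _
  have hP1 : (∏ j ∈ Finset.range p, (((p + i + t : ℕ) : k) - j)) ≠ 0 :=
    fun h => hne (by rw [h, mul_zero])
  have hP2 : (∏ j ∈ Finset.range i, (((t + i : ℕ) : k) - j)) ≠ 0 :=
    fun h => hne (by rw [h]; ring)
  have hsign : (-1 : k) ^ (p + i + t) * (-1 : k) ^ p = (-1 : k) ^ (t + i) := by
    rw [← pow_add, show p + i + t + p = (t + i) + 2 * p from by ring, pow_add, pow_mul]
    norm_num
  rw [show p + t + i = p + i + t from by omega]
  congr 1
  rw [key, ← hsign]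
  have c0 : ((t.factorial : k) * (∏ j ∈ Finset.range i, (((t + i : ℕ) : k) - j)) *
        (∏ j ∈ Finset.range p, (((p + i + t : ℕ) : k) - j))) *
      ((t.factorial : k) * (∏ j ∈ Finset.range i, (((t + i : ℕ) : k) - j)) *
        (∏ j ∈ Finset.range p, (((p + i + t : ℕ) : k) - j)))⁻¹ = 1 := mul_inv_cancel₀ hne
  have w0 : (t.factorial : k) * ((t.factorial : k))⁻¹ = 1 := mul_inv_cancel₀ (hfac t)
  linear_combination ((-1 : k) ^ (p + i + t) * (-1 : k) ^ p * (q.choose i : k) *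
      ((t.factorial : k))⁻¹) * c0 -
    ((-1 : k) ^ (p + i + t) * (-1 : k) ^ p * (q.choose i : k) *
      (∏ j ∈ Finset.range p, (((p + i + t : ℕ) : k) - j)) *
      (∏ j ∈ Finset.range i, (((t + i : ℕ) : k) - j)) *
      ((t.factorial : k) * (∏ j ∈ Finset.range i, (((t + i : ℕ) : k) - j)) *
        (∏ j ∈ Finset.range p, (((p + i + t : ℕ) : k) - j)))⁻¹) * w0

end CC16sec


/-- for a conformal algebra `C` (a `k[D]`-module with `n`-products
satisfying locality), the sesquilinearity axioms are equivalent to the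
`H`-bilinearity of the pseudoproduct
`a ∗ b = ∑_s ((−D)^s/s!) ⊗ 1 ⊗_{k[D]} (a ∘ₛ b)`.  The pseudoproduct is written
under the canonical identification `(k[D] ⊗ k[D]) ⊗_{k[D]} C ≅ k[D] ⊗_k C`,
`(f ⊗ g) ⊗_{k[D]} c ↦ f·S(g₍₁₎) ⊗ g₍₂₎ c`, and it suffices to take
`f = D^p`, `g = D^q`. -/
theorem sesquilinearity_iff_pseudoproduct_bilinear
    {k C : Type*} [Field k] [CharZero k] [AddCommGroup C] [Module k C]
    [Module (Polynomial k) C] [IsScalarTower k (Polynomial k) C]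
    (prod : ℕ → C →ₗ[k] C →ₗ[k] C)
    (hloc : ∀ a b : C, ∃ N : ℕ, ∀ s, N ≤ s → prod s a b = 0) :
    ((∀ a b : C, prod 0 ((X : Polynomial k) • a) b = 0) ∧
     (∀ (n : ℕ) (a b : C),
        prod (n + 1) ((X : Polynomial k) • a) b = -(((n : ℕ) + 1 : k)) • prod n a b) ∧
     (∀ a b : C,
        prod 0 a ((X : Polynomial k) • b) = (X : Polynomial k) • prod 0 a b) ∧
     (∀ (n : ℕ) (a b : C),
        prod (n + 1) a ((X : Polynomial k) • b)
          = (X : Polynomial k) • prod (n + 1) a b + (((n : ℕ) + 1 : k)) • prod n a b))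
    ↔
    (∀ (a b : C) (p q N : ℕ),
      (∀ s, N ≤ s →
        prod s ((X ^ p : Polynomial k) • a) ((X ^ q : Polynomial k) • b) = 0 ∧
        prod s a b = 0) →
      ∑ s ∈ Finset.range N, ((-1 : k) ^ s * ((s.factorial : k))⁻¹) •
          ((X ^ s : Polynomial k) ⊗ₜ[k]
            prod s ((X ^ p : Polynomial k) • a) ((X ^ q : Polynomial k) • b))
        = ∑ s ∈ Finset.range N, ∑ i ∈ Finset.range (q + 1),
            ((-1 : k) ^ (s + i) * (q.choose i : k) * ((s.factorial : k))⁻¹) •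
              ((X ^ (p + s + i) : Polynomial k) ⊗ₜ[k]
                ((X ^ (q - i) : Polynomial k) • prod s a b))) := by
  constructor
  · rintro ⟨h1, h2, h3, h4⟩
    intro a b p q N hvan
    exact CC16_forward prod h1 h2 h3 h4 a b p q N hvan
  · intro hbil
    exact CC16_backward prod hloc hbil
end

section
/- Let k be a field of characteristic 0, H = k[D], and X = k[[t]] with the pairing ⟨tᵐ, Dⁿ⟩ determined by ⟨t, Dⁿ⟩ = δ_{n,1} and multiplicativity via the coproduct (so ⟨tᵐ, Dⁿ⟩ = n!·δ_{m,n} up to normalization). Then for all h ∈ k[D], x ∈ k[t], and y ∈ k[t,t⁻¹]: ⟨x, h₍₁₎⟩·(y·h₍₂₎) = ⟨x·S(y₍₂₎), h⟩·y₍₁₎, where h₍₁₎⊗h₍₂₎ = Δ(h), the action of k[D] on k[t,t⁻¹] is tⁿ·D = −n t^{n−1}, S(t) = −t is the antipode of k[t], and Δ(tⁿ) = ∑_{s≥0} C(n,s) t^{n−s} ⊗ t^s is the extended coproduct on k[t,t⁻¹]. -/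
/-- the identity `⟨x, h₍₁₎⟩ (y·h₍₂₎) = ⟨x·S(y₍₂₎), h⟩ y₍₁₎` in
`k[t,t⁻¹]`, verified on the basis `h = D^K`, `x = t^m`, `y = t^n` (`n : ℤ`).
Here `⟨tᵐ, Dⁱ⟩ = m!·δ_{m,i}`, the action is `tⁿ·D^j = (−1)^j j! C(n,j) t^{n−j}`,
`Δ(D^K) = ∑_i C(K,i) Dⁱ ⊗ D^{K−i}`, `Δ(tⁿ) = ∑_s C(n,s) t^{n−s} ⊗ tˢ`, and
`S(tˢ) = (−1)ˢ tˢ`; all the sums are finite after pairing against `D^K`. -/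
theorem pairing_swap_identity {k : Type*} [Field k] [CharZero k]
    (K m : ℕ) (n : ℤ) :
    ∑ i ∈ Finset.range (K + 1),
        ((K.choose i : k) * (if m = i then (m.factorial : k) else 0) *
          (((-1 : ℚ) ^ (K - i) * ((K - i).factorial : ℚ) * genChoose n (K - i) : ℚ) : k)) •
          LaurentPolynomial.T (R := k) (n - (K - i : ℕ))
      = ∑ s ∈ Finset.range (K + 1),
          (((genChoose n s : ℚ) : k) * (-1 : k) ^ s *
            (if m + s = K then (K.factorial : k) else 0)) •
            LaurentPolynomial.T (R := k) (n - s) := by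
  by_cases hm : m ≤ K
  · rw [Finset.sum_eq_single m, Finset.sum_eq_single (K - m)]
    · simp only [if_pos rfl, if_pos (Nat.add_sub_cancel' hm)]
      have hfac : (K.choose m : ℚ) * m.factorial * (K - m).factorial = K.factorial := by
        exact_mod_cast Nat.choose_mul_factorial_mul_factorial hm
      have key : ((K.choose m : ℚ) * m.factorial *
          ((-1) ^ (K - m) * ((K - m).factorial : ℚ) * genChoose n (K - m)) : ℚ)
          = genChoose n (K - m) * (-1) ^ (K - m) * (K.factorial : ℚ) := by
        rw [← hfac]; ring
      congr 1
      exact_mod_cast congrArg (fun q : ℚ => (q : k)) key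
    · intro s hs hne
      rw [if_neg (by omega), mul_zero, zero_smul]
    · intro h
      exact absurd (Finset.mem_range.mpr (by omega)) h
    · intro i hi hne
      rw [if_neg (fun h => hne h.symm), mul_zero, zero_mul, zero_smul]
    · intro h
      exact absurd (Finset.mem_range.mpr (by omega)) h
  · rw [Finset.sum_eq_zero, Finset.sum_eq_zero]
    · intro s hs
      rw [if_neg (by omega), mul_zero, zero_smul]
    · intro i hi
      rw [if_neg (by simp at hi; omega), mul_zero, zero_mul, zero_smul]
end
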